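/- If a characteristic function ψ is Harris randomly self-decomposable with parameter k, then taking c = 1 shows ψ is Harris infinitely divisible: for each p ∈ (0,1), with a = 1/p, there exists a characteristic function ψ_p such that ψ(t) = ψ_p(t)/(a - (a-1)ψ_p(t)^k)^{1/k}. -/

import Mathlib

open MeasureTheory Set

/-- `ψ` is the characteristic function of some probability measure on `ℝ`. -/
def IsCF (ψ : ℝ → ℂ) : Prop :=
  ∃ μ : Measure ℝ, IsProbabilityMeasure μ ∧
    ∀ t : ℝ, ψ t = ∫ x, Complex.exp (Complex.I * t * x) ∂μ

lemma IsCF.abs_le_one {ψ : ℝ → ℂ} (h : IsCF ψ) (t : ℝ) : ‖ψ t‖ ≤ 1 := by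
  obtain ⟨μ, hμ, hint⟩ := h
  rw [hint]
  calc ‖∫ x, Complex.exp (Complex.I * t * x) ∂μ‖
      ≤ ∫ x, ‖Complex.exp (Complex.I * t * x)‖ ∂μ :=
        norm_integral_le_integral_norm _
    _ = ∫ _x, (1:ℝ) ∂μ := by
        apply integral_congr_ae
        filter_upwards with x
        simp [Complex.norm_exp]
    _ = 1 := by simp

/-- HRSD ⇒ HID (take c = 1). -/
theorem hrsd_implies_hid (k : ℕ) (hk : 0 < k) (ψ : ℝ → ℂ) (hψ : IsCF ψ)
    (hHRSD : ∀ c ∈ Ioc (0:ℝ) 1, ∀ p ∈ Ico (0:ℝ) 1,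
      ∃ φ : ℝ → ℂ, IsCF φ ∧
        ∀ t : ℝ, ψ t = φ t * ((p : ℂ) + (1 - (p : ℂ)) * (ψ (c * t)) ^ k) ^ ((k : ℂ)⁻¹)) :
    ∀ p ∈ Ioo (0:ℝ) 1, ∀ a : ℝ, a = 1 / p →
      ∃ ψp : ℝ → ℂ, IsCF ψp ∧
        ∀ t : ℝ, ψ t = ψp t / (((a : ℂ) - ((a : ℂ) - 1) * (ψp t) ^ k) ^ ((k : ℂ)⁻¹)) := by
  intro p hp a ha
  obtain ⟨hp0, hp1⟩ := hp
  obtain ⟨φ, hφCF, heq⟩ := hHRSD 1 ⟨one_pos, le_refl 1⟩ p ⟨hp0.le, hp1⟩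
  refine ⟨φ, hφCF, fun t => ?_⟩
  have heqt := heq t
  rw [one_mul] at heqt
  set E : ℂ := (p:ℂ) + (1 - (p:ℂ)) * ψ t ^ k with hE
  have hpC : ((p:ℂ)) ≠ 0 := by exact_mod_cast hp0.ne'
  have hkinv : ((k:ℂ))⁻¹ ≠ 0 := by
    simp [Nat.cast_ne_zero, hk.ne']
  -- E ≠ 0
  have hEne : E ≠ 0 := by
    intro h0
    rw [h0, Complex.zero_cpow hkinv, mul_zero] at heqt
    have : E = (p:ℂ) := by rw [hE, heqt, zero_pow hk.ne']; ring
    rw [h0] at this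
    exact hpC this.symm
  have hpow : ψ t ^ k = φ t ^ k * E := by
    rw [heqt, mul_pow, Complex.cpow_nat_inv_pow _ hk.ne']
  have hφle : ‖φ t‖ ≤ 1 := hφCF.abs_le_one t
  have habs : ‖ψ t ^ k‖ ≤ ‖E‖ := by
    rw [hpow, norm_mul, norm_pow]
    exact mul_le_of_le_one_left (norm_nonneg E)
      (pow_le_one₀ (norm_nonneg _) hφle)
  -- arg E ≠ π
  have hargE : E.arg ≠ Real.pi := by
    intro harg
    obtain ⟨hre, him⟩ := Complex.arg_eq_pi_iff.mp harg
    have h1p : (1:ℂ) - (p:ℂ) ≠ 0 := by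
      intro h
      have : (p:ℝ) = 1 := by
        have := sub_eq_zero.mp h
        exact_mod_cast this.symm
      linarith
    have hψk : ψ t ^ k = (E - (p:ℂ)) / (1 - (p:ℂ)) := by
      rw [hE]; field_simp; ring
    have hEeq : E = ((E.re : ℝ) : ℂ) := by
      simp [Complex.ext_iff, him]
    have habsE : ‖E‖ = -E.re :=
      calc ‖E‖ = ‖((E.re : ℝ) : ℂ)‖ := by rw [← hEeq]
        _ = |E.re| := by rw [Complex.norm_real, Real.norm_eq_abs]
        _ = -E.re := abs_of_neg hre
    have hsub : E - (p:ℂ) = ((E.re - p : ℝ) : ℂ) := by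
      simp [Complex.ext_iff, him]
    have hone : (1:ℂ) - (p:ℂ) = ((1 - p : ℝ) : ℂ) := by push_cast; ring
    have habsψk : ‖ψ t ^ k‖ = (p - E.re) / (1 - p) := by
      rw [hψk, hsub, hone, norm_div, Complex.norm_real, Complex.norm_real, Real.norm_eq_abs, Real.norm_eq_abs,
        abs_of_neg (by linarith : E.re - p < 0), abs_of_pos (by linarith : (0:ℝ) < 1 - p)]
      ring
    rw [habsψk, habsE] at habs
    rw [div_le_iff₀ (by linarith : (0:ℝ) < 1 - p)] at habs
    nlinarith
  -- a * p = 1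
  have hapR : a * p = 1 := by rw [ha]; field_simp
  have hap : (a:ℂ) * (p:ℂ) = 1 := by exact_mod_cast hapR
  -- the denominator equals E⁻¹
  have hmul : E * ((a:ℂ) - ((a:ℂ) - 1) * φ t ^ k) = 1 := by
    rw [hE]
    rw [hE] at hpow
    linear_combination ((a:ℂ) - 1) * hpow + (1 - ψ t ^ k) * hap
  have hD : (a:ℂ) - ((a:ℂ) - 1) * φ t ^ k = E⁻¹ := eq_inv_of_mul_eq_one_left (by
    rw [mul_comm]; exact hmul)
  rw [hD, Complex.inv_cpow _ _ hargE, div_eq_mul_inv, inv_inv]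
  exact heqt
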